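/- Any distributive lattice with 0 endowed with an additive weak contact relation satisfies condition (D2): if ¬(c_{i,0} δ c_{i,1}) for each i = 1,…,n, and for every f : {1,…,n} → {0,1} either b ≤ c_{1,f(1)} ⊔ … ⊔ c_{n,f(n)} or a ≤ c_{1,f(1)} ⊔ … ⊔ c_{n,f(n)}, then ¬(b δ a). -/

import Mathlib

open Classical

/-- Auxiliary: existence of a "prime filter" containing `b` all of whose elements
satisfy a monotone, additive predicate `C`. -/
lemma exists_prime_filter_aux {L : Type*} [DistribLattice L] [OrderBot L]
    (C : L → Prop) (Cmono : ∀ x y : L, x ≤ y → C x → C y)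
    (Cadd : ∀ x y : L, C (x ⊔ y) → C x ∨ C y)
    (b : L) (hb : C b) :
    ∃ F : Set L, b ∈ F ∧ (∀ x ∈ F, ∀ y : L, x ≤ y → y ∈ F) ∧
      (∀ x ∈ F, ∀ y ∈ F, x ⊓ y ∈ F) ∧ (∀ x ∈ F, C x) ∧
      (∀ x y : L, x ⊔ y ∈ F → x ∈ F ∨ y ∈ F) := by
  set S : Set (Set L) := {F | b ∈ F ∧ (∀ x ∈ F, ∀ y : L, x ≤ y → y ∈ F) ∧
      (∀ x ∈ F, ∀ y ∈ F, x ⊓ y ∈ F) ∧ (∀ x ∈ F, C x)} with hS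
  have hb0 : {z : L | b ≤ z} ∈ S :=
    ⟨le_refl b, fun x hx y hxy => le_trans hx hxy,
      fun x hx y hy => le_inf hx hy, fun x hx => Cmono b x hx hb⟩
  have hchain : ∀ c ⊆ S, IsChain (· ⊆ ·) c → c.Nonempty →
      ∃ ub ∈ S, ∀ s ∈ c, s ⊆ ub := by
    intro ch hchS hchain ⟨F0, hF0⟩
    refine ⟨⋃₀ ch, ⟨?_, ?_, ?_, ?_⟩, fun s hs => Set.subset_sUnion_of_mem hs⟩
    · exact ⟨F0, hF0, (hchS hF0).1⟩
    · rintro x ⟨F, hF, hxF⟩ y hxy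
      exact ⟨F, hF, (hchS hF).2.1 x hxF y hxy⟩
    · rintro x ⟨F, hF, hxF⟩ y ⟨F', hF', hyF'⟩
      rcases hchain.total hF hF' with h | h
      · exact ⟨F', hF', (hchS hF').2.2.1 x (h hxF) y hyF'⟩
      · exact ⟨F, hF, (hchS hF).2.2.1 x hxF y (h hyF')⟩
    · rintro x ⟨F, hF, hxF⟩
      exact (hchS hF).2.2.2 x hxF
  obtain ⟨M, hbM, hMmax⟩ := zorn_subset_nonempty S hchain _ hb0
  obtain ⟨hbMem, hMup, hMinf, hMC⟩ := hMmax.prop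
  refine ⟨M, hbMem, hMup, hMinf, hMC, ?_⟩
  intro x y hxy
  by_contra hcon
  push_neg at hcon
  obtain ⟨hxM, hyM⟩ := hcon
  have hext : ∀ w : L, w ∉ M → ∃ m ∈ M, ¬ C (m ⊓ w) := by
    intro w hwM
    by_contra h
    push_neg at h
    have hMw : {z : L | ∃ m ∈ M, m ⊓ w ≤ z} ∈ S := by
      refine ⟨⟨b, hbMem, inf_le_left.trans le_rfl⟩, ?_, ?_, ?_⟩
      · rintro z ⟨m, hm, hmz⟩ v hzv; exact ⟨m, hm, hmz.trans hzv⟩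
      · rintro z ⟨m, hm, hmz⟩ v ⟨m', hm', hm'v⟩
        exact ⟨m ⊓ m', hMinf m hm m' hm',
          le_inf ((inf_le_inf inf_le_left le_rfl).trans hmz)
            ((inf_le_inf inf_le_right le_rfl).trans hm'v)⟩
      · rintro z ⟨m, hm, hmz⟩
        exact Cmono _ _ hmz (h m hm)
    have hsub : M ⊆ {z : L | ∃ m ∈ M, m ⊓ w ≤ z} := fun m hm => ⟨m, hm, inf_le_left⟩
    exact hwM (hMmax.2 hMw hsub ⟨b, hbMem, inf_le_right⟩)
  obtain ⟨m, hm, hmx⟩ := hext x hxM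
  obtain ⟨m', hm', hm'y⟩ := hext y hyM
  have hm'' : m ⊓ m' ⊓ (x ⊔ y) ∈ M := hMinf _ (hMinf m hm m' hm') _ hxy
  have hC'' : C (m ⊓ m' ⊓ (x ⊔ y)) := hMC _ hm''
  have heq : m ⊓ m' ⊓ (x ⊔ y) = (m ⊓ m' ⊓ x) ⊔ (m ⊓ m' ⊓ y) := inf_sup_left _ _ _
  rw [heq] at hC''
  rcases Cadd _ _ hC'' with h | h
  · exact hmx (Cmono _ _ (inf_le_inf inf_le_left le_rfl) h)
  · exact hm'y (Cmono _ _ (inf_le_inf inf_le_right le_rfl) h)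

/-- Auxiliary: a prime filter not containing `⊥` containing a finite sup contains
one of the elements. -/
lemma sup_mem_of_prime_aux {L : Type*} [DistribLattice L] [OrderBot L]
    {F : Set L} (hbot : (⊥ : L) ∉ F)
    (hprime : ∀ x y : L, x ⊔ y ∈ F → x ∈ F ∨ y ∈ F)
    {ι : Type*} [DecidableEq ι] (s : Finset ι) (g : ι → L)
    (h : s.sup g ∈ F) : ∃ i ∈ s, g i ∈ F := by
  induction s using Finset.induction_on with
  | empty => rw [Finset.sup_empty] at h; exact absurd h hbot
  | insert _ _ hx ih =>
    rw [Finset.sup_insert] at h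
    rcases hprime _ _ h with h | h
    · exact ⟨_, Finset.mem_insert_self _ _, h⟩
    · obtain ⟨i, hi, hgi⟩ := ih h
      exact ⟨i, Finset.mem_insert_of_mem hi, hgi⟩

/-- A distributive lattice with `⊥` and an additive weak contact relation
satisfies (D2). -/
theorem additive_contact_satisfies_d2 {L : Type*} [DistribLattice L] [OrderBot L]
    (δ : L → L → Prop)
    (hSym : ∀ a b : L, δ a b → δ b a)
    (hEmp : ∀ a b : L, δ a b → ⊥ < a ∧ ⊥ < b)
    (hExt : ∀ a b a₁ b₁ : L, δ a b → a ≤ a₁ → b ≤ b₁ → δ a₁ b₁)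
    (hRef : ∀ n : L, n ≠ ⊥ → δ n n)
    (hAdd : ∀ a b c : L, δ a (b ⊔ c) → δ a b ∨ δ a c) :
    ∀ (n : ℕ) (a b : L) (c : Fin n → Fin 2 → L),
      (∀ i, ¬ δ (c i 0) (c i 1)) →
      (∀ f : Fin n → Fin 2,
        b ≤ Finset.univ.sup (fun i => c i (f i)) ∨
        a ≤ Finset.univ.sup (fun i => c i (f i))) →
      ¬ δ b a := by
  intro n a b c hc H hba
  have hdisj : ∀ i : Fin n, c i 0 ⊓ c i 1 = ⊥ := by
    intro i
    by_contra hne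
    exact hc i (hExt _ _ _ _ (hRef _ hne) inf_le_left inf_le_right)
  obtain ⟨F, hbF, hFup, hFinf, hFC, hFprime⟩ :=
    exists_prime_filter_aux (fun x => δ x a)
      (fun x y hxy hx => hExt x a y a hx hxy le_rfl)
      (fun x y hxy => by
        rcases hAdd a x y (hSym _ _ hxy) with h | h
        · exact Or.inl (hSym _ _ h)
        · exact Or.inr (hSym _ _ h)) b hba
  have hFbot : (⊥ : L) ∉ F := fun h => absurd (hEmp _ _ (hFC _ h)).1 (lt_irrefl _)
  obtain ⟨G, haG, hGup, hGinf, hGC, hGprime⟩ :=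
    exists_prime_filter_aux (fun y => ∀ s ∈ F, δ s y)
      (fun x y hxy hx s hs => hExt s x s y (hx s hs) le_rfl hxy)
      (fun x y hxy => by
        by_contra hcon
        rw [not_or] at hcon
        obtain ⟨h1, h2⟩ := hcon
        simp only [not_forall, exists_prop] at h1 h2
        obtain ⟨s₁, hs₁, hs₁x⟩ := h1
        obtain ⟨s₂, hs₂, hs₂y⟩ := h2
        rcases hAdd (s₁ ⊓ s₂) x y (hxy _ (hFinf _ hs₁ _ hs₂)) with h | h
        · exact hs₁x (hExt _ _ _ _ h inf_le_left le_rfl)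
        · exact hs₂y (hExt _ _ _ _ h inf_le_right le_rfl))
      a (fun s hs => hFC s hs)
  have hGbot : (⊥ : L) ∉ G := fun h => absurd (hEmp _ _ (hGC _ h b hbF)).2 (lt_irrefl _)
  have key : ∀ i : Fin n, ∃ k : Fin 2, c i k ∉ F ∧ c i k ∉ G := by
    intro i
    by_contra hcon
    rcases Classical.em (c i 0 ∈ F) with h0F | h0F
    · rcases Classical.em (c i 1 ∈ F) with h1F | h1F
      · exact hFbot (hdisj i ▸ hFinf _ h0F _ h1F)
      · have h1G : c i 1 ∈ G := by
          by_contra hg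
          exact hcon ⟨1, h1F, hg⟩
        exact hc i (hGC _ h1G _ h0F)
    · have h0G : c i 0 ∈ G := by
        by_contra hg
        exact hcon ⟨0, h0F, hg⟩
      rcases Classical.em (c i 1 ∈ F) with h1F | h1F
      · exact hc i (hSym _ _ (hGC _ h0G _ h1F))
      · have h1G : c i 1 ∈ G := by
          by_contra hg
          exact hcon ⟨1, h1F, hg⟩
        exact hGbot (hdisj i ▸ hGinf _ h0G _ h1G)
  choose f hf using key
  rcases H f with hle | hle
  · have hsup : Finset.univ.sup (fun i => c i (f i)) ∈ F := hFup b hbF _ hle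
    obtain ⟨i, _, hi⟩ := sup_mem_of_prime_aux hFbot hFprime Finset.univ _ hsup
    exact (hf i).1 hi
  · have hsup : Finset.univ.sup (fun i => c i (f i)) ∈ G := hGup a haG _ hle
    obtain ⟨i, _, hi⟩ := sup_mem_of_prime_aux hGbot hGprime Finset.univ _ hsup
    exact (hf i).2 hi
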